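/- Let G = (L, R, E) be a finite bipartite graph and let its vertices arrive in an order in which all vertices of L precede all vertices of R. Run GreedyAllocation with allocation function f(t) = t + α where α = 1/(e−1), producing final potentials y : L ∪ R → [0,1]. Then y is a fractional vertex cover of G, and for every vertex cover C* ⊆ L ∪ R of G (a set of vertices containing an endpoint of each edge), Σ_{v ∈ L∪R} y_v ≤ (1+α)·|C*| = |C*|/(1 − 1/e). -/

import Mathlib

open Finset

/-- The water level chosen by `GreedyAllocation` with allocation function `f`:
the supremum of `t ∈ [0,1]` such that raising all potentials in `S` up to `t`
costs at most `f t`. -/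
noncomputable def waterLevel {ι : Type*} (f : ℝ → ℝ) (S : Finset ι) (y : ι → ℝ) : ℝ :=
  sSup {t ∈ Set.Icc (0:ℝ) 1 | ∑ u ∈ S, max (t - y u) 0 ≤ f t}

/-- The previously arrived neighbors of vertex `i` (vertices arrive in the
order `0, 1, …, n-1`; `E` is the adjacency predicate of the graph). -/
def neighborsBefore {n : ℕ} (E : Fin n → Fin n → Bool) (i : Fin n) : Finset (Fin n) :=
  Finset.univ.filter fun j => j < i ∧ E j i = true

/-- Potentials maintained by `GreedyAllocation` with allocation function `f`
after `i` vertices have been processed. When vertex `i` arrives, the water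
level `w` is computed over its previously arrived neighbors; each such
neighbor's potential is raised to at least `w`, and vertex `i` receives
potential `1 - w`. -/
noncomputable def greedyPotential (f : ℝ → ℝ) {n : ℕ} (E : Fin n → Fin n → Bool) :
    ℕ → Fin n → ℝ
  | 0 => fun _ => 0
  | (i + 1) => fun v =>
      if h : i < n then
        let vi : Fin n := ⟨i, h⟩
        let w := waterLevel f (neighborsBefore E vi) (greedyPotential f E i)
        if v = vi then 1 - w
        else if v ∈ neighborsBefore E vi then max (greedyPotential f E i v) w
        else greedyPotential f E i v
      else greedyPotential f E i v

/-- The water level used when processing vertex `i`. -/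
noncomputable def stepLevel (f : ℝ → ℝ) {n : ℕ} (E : Fin n → Fin n → Bool) (i : Fin n) : ℝ :=
  waterLevel f (neighborsBefore E i) (greedyPotential f E i.val)

/-- The edge values set by the `PrimalDual` algorithm: when vertex `i` arrives,
for each previously arrived neighbor `j` the edge `(j,i)` receives value
`(max(w_i - y_j, 0)/β)·(1 + (1 - w_i)/f(w_i))`, using the potentials before
updating; all other pairs get `0`. -/
noncomputable def pdEdge (f : ℝ → ℝ) (β : ℝ) {n : ℕ} (E : Fin n → Fin n → Bool)
    (j i : Fin n) : ℝ :=
  if j < i ∧ E j i = true then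
    (max (stepLevel f E i - greedyPotential f E i.val j) 0 / β) *
      (1 + (1 - stepLevel f E i) / f (stepLevel f E i))
  else 0

section WL
variable {ι : Type*} {α : ℝ} {f : ℝ → ℝ}

lemma wl_spec (hα : 0 < α) (hf : ∀ t, f t = t + α)
    (S : Finset ι) (y : ι → ℝ) (hy : ∀ u, 0 ≤ y u) :
    waterLevel f S y ∈ {t ∈ Set.Icc (0:ℝ) 1 | ∑ u ∈ S, max (t - y u) 0 ≤ f t} := by
  have hcont : Continuous fun t : ℝ => ∑ u ∈ S, max (t - y u) 0 :=
    continuous_finset_sum _ fun u _ =>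
      ((continuous_id.sub continuous_const).max continuous_const)
  have hfc : Continuous f := by
    have h : f = fun t => t + α := funext hf
    rw [h]; continuity
  have hclosed : IsClosed {t ∈ Set.Icc (0:ℝ) 1 | ∑ u ∈ S, max (t - y u) 0 ≤ f t} := by
    have h : {t ∈ Set.Icc (0:ℝ) 1 | ∑ u ∈ S, max (t - y u) 0 ≤ f t}
        = Set.Icc (0:ℝ) 1 ∩ {t | ∑ u ∈ S, max (t - y u) 0 ≤ f t} := rfl
    rw [h]
    exact isClosed_Icc.inter (isClosed_le hcont hfc)
  have hne : (0:ℝ) ∈ {t ∈ Set.Icc (0:ℝ) 1 | ∑ u ∈ S, max (t - y u) 0 ≤ f t} := by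
    refine ⟨⟨le_refl 0, zero_le_one⟩, ?_⟩
    have h0 : ∀ u ∈ S, max ((0:ℝ) - y u) 0 = 0 := by
      intro u _
      have := hy u
      simp only [zero_sub]
      exact max_eq_right (by linarith)
    rw [Finset.sum_congr rfl h0, Finset.sum_const, hf]
    simp
    linarith
  have hbdd : BddAbove {t ∈ Set.Icc (0:ℝ) 1 | ∑ u ∈ S, max (t - y u) 0 ≤ f t} :=
    ⟨1, fun t ht => ht.1.2⟩
  exact hclosed.csSup_mem ⟨0, hne⟩ hbdd

lemma wl_tight (hα : 0 < α) (hf : ∀ t, f t = t + α)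
    (S : Finset ι) (y : ι → ℝ) (hy : ∀ u, 0 ≤ y u)
    (h1 : waterLevel f S y < 1) :
    f (waterLevel f S y) ≤ ∑ u ∈ S, max (waterLevel f S y - y u) 0 := by
  by_contra hlt
  push_neg at hlt
  set w := waterLevel f S y with hw
  have hspec := wl_spec hα hf S y hy
  have hU : IsOpen {t : ℝ | ∑ u ∈ S, max (t - y u) 0 < f t} := by
    have hcont : Continuous fun t : ℝ => ∑ u ∈ S, max (t - y u) 0 :=
      continuous_finset_sum _ fun u _ =>
        ((continuous_id.sub continuous_const).max continuous_const)
    have hfc : Continuous f := by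
      have h : f = fun t => t + α := funext hf
      rw [h]; continuity
    exact isOpen_lt hcont hfc
  have hwU : w ∈ {t : ℝ | ∑ u ∈ S, max (t - y u) 0 < f t} := hlt
  obtain ⟨δ, hδ, hball⟩ := Metric.isOpen_iff.1 hU w hwU
  set m := min δ (1 - w) with hm
  have hm0 : 0 < m := lt_min hδ (by linarith)
  have ht : w + m / 2 ∈ {t ∈ Set.Icc (0:ℝ) 1 | ∑ u ∈ S, max (t - y u) 0 ≤ f t} := by
    have hwt : w + m / 2 ∈ Metric.ball w δ := by
      rw [Metric.mem_ball, Real.dist_eq]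
      have : |w + m / 2 - w| = m / 2 := by rw [show w + m/2 - w = m/2 by ring]; exact abs_of_pos (by linarith)
      rw [this]
      have : m ≤ δ := min_le_left _ _
      linarith
    refine ⟨⟨?_, ?_⟩, le_of_lt (hball hwt)⟩
    · have := hspec.1.1; linarith
    · have : m ≤ 1 - w := min_le_right _ _; linarith
  have hle := le_csSup (s := {t ∈ Set.Icc (0:ℝ) 1 | ∑ u ∈ S, max (t - y u) 0 ≤ f t}) ⟨1, fun t htt => htt.1.2⟩ ht
  have : w + m / 2 ≤ w := hle
  linarith

end WL

section GP
variable {n : ℕ} {α : ℝ} {f : ℝ → ℝ} (E : Fin n → Fin n → Bool)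

lemma gp_succ (k : ℕ) (h : k < n) (v : Fin n) :
    greedyPotential f E (k+1) v =
      if v = (⟨k, h⟩ : Fin n) then 1 - stepLevel f E ⟨k, h⟩
      else if v ∈ neighborsBefore E ⟨k, h⟩ then
        max (greedyPotential f E k v) (stepLevel f E ⟨k, h⟩)
      else greedyPotential f E k v := by
  rw [greedyPotential]
  simp only [dif_pos h]
  rfl

lemma mem_nb {i j : Fin n} : j ∈ neighborsBefore E i ↔ (j < i ∧ E j i = true) := by
  simp [neighborsBefore]

lemma gp_zero_of_le : ∀ (k : ℕ) (v : Fin n), k ≤ v.val → greedyPotential f E k v = 0 := by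
  intro k
  induction k with
  | zero => intro v _; rfl
  | succ k ih =>
    intro v hv
    have hkv : k < v.val := Nat.lt_of_succ_le hv
    have hk : k < n := lt_trans hkv v.isLt
    rw [gp_succ E k hk v]
    rw [if_neg, if_neg]
    · exact ih v (le_of_lt hkv)
    · intro hmem
      have := ((mem_nb E).1 hmem).1
      have : v.val < k := this
      omega
    · intro hveq
      rw [hveq] at hkv
      simp at hkv

lemma gp_mem (hα : 0 < α) (hf : ∀ t, f t = t + α) :
    ∀ (k : ℕ) (v : Fin n), greedyPotential f E k v ∈ Set.Icc (0:ℝ) 1 := by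
  intro k
  induction k with
  | zero => intro v; exact ⟨le_refl 0, zero_le_one⟩
  | succ k ih =>
    intro v
    by_cases hk : k < n
    · have hw := wl_spec hα hf (neighborsBefore E (⟨k, hk⟩ : Fin n))
        (greedyPotential f E k) (fun u => (ih u).1)
      have hw0 : (0:ℝ) ≤ stepLevel f E ⟨k, hk⟩ := hw.1.1
      have hw1 : stepLevel f E ⟨k, hk⟩ ≤ 1 := hw.1.2
      rw [gp_succ E k hk v]
      split_ifs with h1 h2
      · constructor <;> [linarith; linarith]
      · exact ⟨le_trans (ih v).1 (le_max_left _ _), max_le (ih v).2 hw1⟩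
      · exact ih v
    · rw [greedyPotential]
      simp only [dif_neg hk]
      exact ih v

lemma sl_spec (hα : 0 < α) (hf : ∀ t, f t = t + α) (i : Fin n) :
    stepLevel f E i ∈ Set.Icc (0:ℝ) 1 ∧
      ∑ j ∈ neighborsBefore E i, max (stepLevel f E i - greedyPotential f E i.val j) 0
        ≤ f (stepLevel f E i) :=
  wl_spec hα hf _ _ (fun u => (gp_mem E hα hf i.val u).1)

lemma sl_tight (hα : 0 < α) (hf : ∀ t, f t = t + α) (i : Fin n)
    (h1 : stepLevel f E i < 1) :
    f (stepLevel f E i) ≤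
      ∑ j ∈ neighborsBefore E i, max (stepLevel f E i - greedyPotential f E i.val j) 0 :=
  wl_tight hα hf _ _ (fun u => (gp_mem E hα hf i.val u).1) h1

lemma gp_le_succ (hα : 0 < α) (hf : ∀ t, f t = t + α) (k : ℕ) (v : Fin n) :
    greedyPotential f E k v ≤ greedyPotential f E (k+1) v := by
  by_cases hk : k < n
  · rw [gp_succ E k hk v]
    split_ifs with h1 h2
    · have h0 : greedyPotential f E k v = 0 := gp_zero_of_le E k v (by rw [h1])
      have hw1 : stepLevel f E (⟨k, hk⟩ : Fin n) ≤ 1 := (sl_spec E hα hf _).1.2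
      rw [h0]; linarith
    · exact le_max_left _ _
    · exact le_refl _
  · rw [greedyPotential]
    simp only [dif_neg hk]
    exact le_refl _

lemma gp_mono (hα : 0 < α) (hf : ∀ t, f t = t + α) {k m : ℕ} (hkm : k ≤ m) (v : Fin n) :
    greedyPotential f E k v ≤ greedyPotential f E m v := by
  induction m with
  | zero =>
    have : k = 0 := Nat.le_zero.1 hkm
    rw [this]
  | succ m ih =>
    rcases Nat.lt_or_ge k (m+1) with h | h
    · exact le_trans (ih (Nat.lt_succ_iff.1 h)) (gp_le_succ E hα hf m v)
    · have : k = m + 1 := le_antisymm hkm h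
      rw [this]

end GP
noncomputable def pdX (f : ℝ → ℝ) (α : ℝ) {n : ℕ} (E : Fin n → Fin n → Bool) (j i : Fin n) : ℝ :=
  if j ∈ neighborsBefore E i then
    max (stepLevel f E i - greedyPotential f E i.val j) 0 / (stepLevel f E i + α)
  else 0

section PD
variable {n : ℕ} {α : ℝ} {f : ℝ → ℝ} (E : Fin n → Fin n → Bool)

lemma pdX_nonneg (hα : 0 < α) (hf : ∀ t, f t = t + α) (j i : Fin n) :
    0 ≤ pdX f α E j i := by
  unfold pdX
  split_ifs with h
  · have hw0 : (0:ℝ) ≤ stepLevel f E i := (sl_spec E hα hf i).1.1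
    exact div_nonneg (le_max_right _ _) (by linarith)
  · exact le_refl 0

lemma col_eq (i : Fin n) :
    ∑ j, pdX f α E j i =
      (∑ j ∈ neighborsBefore E i,
        max (stepLevel f E i - greedyPotential f E i.val j) 0) / (stepLevel f E i + α) := by
  rw [Finset.sum_div]
  unfold pdX
  rw [Finset.sum_ite_mem, Finset.univ_inter]

lemma col_le_one (hα : 0 < α) (hf : ∀ t, f t = t + α) (i : Fin n) :
    ∑ j, pdX f α E j i ≤ 1 := by
  rw [col_eq]
  have hw0 : (0:ℝ) ≤ stepLevel f E i := (sl_spec E hα hf i).1.1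
  have hD := (sl_spec E hα hf i).2
  rw [hf] at hD
  rw [div_le_one (by linarith)]
  exact hD

lemma step_eq (hα : 0 < α) (hf : ∀ t, f t = t + α) (i : Fin n) :
    (1 - stepLevel f E i) +
      ∑ j ∈ neighborsBefore E i, max (stepLevel f E i - greedyPotential f E i.val j) 0
      = (1 + α) * ∑ j, pdX f α E j i := by
  rw [col_eq]
  set w := stepLevel f E i with hw
  set D := ∑ j ∈ neighborsBefore E i, max (w - greedyPotential f E i.val j) 0 with hD
  have hw0 : (0:ℝ) ≤ w := (sl_spec E hα hf i).1.1
  have hw1 : w ≤ 1 := (sl_spec E hα hf i).1.2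
  have hpos : 0 < w + α := by linarith
  rcases lt_or_eq_of_le hw1 with h1 | h1
  · have ht := sl_tight E hα hf i h1
    have hm := (sl_spec E hα hf i).2
    rw [hf] at ht hm
    have hDeq : D = w + α := le_antisymm hm ht
    rw [hDeq]
    field_simp
    ring
  · rw [h1]
    have : (1:ℝ) + α ≠ 0 := by linarith
    field_simp
    ring

lemma max_add_decomp (a b : ℝ) : max a b = a + max (b - a) 0 := by
  rcases le_total a b with h | h
  · rw [max_eq_right h, max_eq_left (sub_nonneg.2 h)]; ring
  · rw [max_eq_left h, max_eq_right (sub_nonpos.2 h)]; ring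

lemma step_sum (hα : 0 < α) (hf : ∀ t, f t = t + α) (k : ℕ) (hk : k < n) :
    ∑ v, greedyPotential f E (k+1) v = ∑ v, greedyPotential f E k v +
      ((1 - stepLevel f E ⟨k, hk⟩) +
        ∑ j ∈ neighborsBefore E ⟨k, hk⟩,
          max (stepLevel f E ⟨k, hk⟩ - greedyPotential f E k j) 0) := by
  have hform : ∀ v, greedyPotential f E (k+1) v = greedyPotential f E k v +
      ((if v = (⟨k, hk⟩ : Fin n) then 1 - stepLevel f E ⟨k, hk⟩ else 0) +
        (if v ∈ neighborsBefore E (⟨k, hk⟩ : Fin n) then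
          max (stepLevel f E ⟨k, hk⟩ - greedyPotential f E k v) 0 else 0)) := by
    intro v
    rw [gp_succ E k hk v]
    by_cases h1 : v = (⟨k, hk⟩ : Fin n)
    · have hnm : (⟨k, hk⟩ : Fin n) ∉ neighborsBefore E ⟨k, hk⟩ := by
        intro hmem
        exact absurd ((mem_nb E).1 hmem).1 (lt_irrefl _)
      subst h1
      rw [if_pos rfl, if_pos rfl, if_neg hnm]
      rw [gp_zero_of_le E k ⟨k, hk⟩ (le_refl k)]
      ring
    · rw [if_neg h1, if_neg h1]
      by_cases h2 : v ∈ neighborsBefore E (⟨k, hk⟩ : Fin n)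
      · rw [if_pos h2, if_pos h2, zero_add, max_add_decomp]
      · rw [if_neg h2, if_neg h2]
        ring
  rw [Finset.sum_congr rfl (fun v _ => hform v), Finset.sum_add_distrib,
    Finset.sum_add_distrib,
    Finset.sum_ite_eq' Finset.univ (⟨k, hk⟩ : Fin n) (fun _ => 1 - stepLevel f E ⟨k, hk⟩),
    if_pos (Finset.mem_univ _), Finset.sum_ite_mem, Finset.univ_inter]

lemma total_eq (hα : 0 < α) (hf : ∀ t, f t = t + α) :
    ∀ k, k ≤ n → ∑ v, greedyPotential f E k v =
      (1 + α) * ∑ i ∈ Finset.univ.filter (fun i : Fin n => i.val < k), ∑ j, pdX f α E j i := by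
  intro k
  induction k with
  | zero =>
    intro _
    have : Finset.univ.filter (fun i : Fin n => i.val < 0) = ∅ := by
      apply Finset.filter_false_of_mem; intro i _; omega
    simp [this, greedyPotential]
  | succ k ih =>
    intro hk1
    have hk : k < n := Nat.lt_of_succ_le hk1
    have hfil : Finset.univ.filter (fun i : Fin n => i.val < k + 1)
        = insert (⟨k, hk⟩ : Fin n) (Finset.univ.filter (fun i : Fin n => i.val < k)) := by
      ext i
      simp only [Finset.mem_filter, Finset.mem_univ, true_and, Finset.mem_insert]
      constructor
      · intro h
        rcases Nat.lt_succ_iff_lt_or_eq.1 h with h' | h'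
        · exact Or.inr h'
        · exact Or.inl (Fin.ext h')
      · rintro (h | h)
        · rw [h]; exact Nat.lt_succ_self k
        · omega
    have hnot : (⟨k, hk⟩ : Fin n) ∉ Finset.univ.filter (fun i : Fin n => i.val < k) := by
      simp only [Finset.mem_filter, Finset.mem_univ, true_and, not_lt]
      exact le_refl k
    rw [hfil, Finset.sum_insert hnot, step_sum E hα hf k hk, ih (le_of_lt hk1),
      step_eq E hα hf ⟨k, hk⟩]
    ring

lemma row_le (hα : 0 < α) (hf : ∀ t, f t = t + α) :
    ∀ k, k ≤ n → ∀ j : Fin n,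
      ∑ i ∈ Finset.univ.filter (fun i : Fin n => i.val < k), pdX f α E j i
        ≤ Real.log ((greedyPotential f E k j + α) / α) := by
  intro k
  induction k with
  | zero =>
    intro _ j
    have : Finset.univ.filter (fun i : Fin n => i.val < 0) = ∅ := by
      apply Finset.filter_false_of_mem; intro i _; omega
    rw [this]
    simp [greedyPotential, div_self (ne_of_gt hα)]
  | succ k ih =>
    intro hk1 j
    have hk : k < n := Nat.lt_of_succ_le hk1
    set i : Fin n := ⟨k, hk⟩ with hi
    set w := stepLevel f E i with hw
    set a := greedyPotential f E k j with ha
    have ha0 : 0 ≤ a := (gp_mem E hα hf k j).1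
    have hw0 : (0:ℝ) ≤ w := (sl_spec E hα hf i).1.1
    have hfil : Finset.univ.filter (fun i : Fin n => i.val < k + 1)
        = insert i (Finset.univ.filter (fun i' : Fin n => i'.val < k)) := by
      ext i'
      simp only [Finset.mem_filter, Finset.mem_univ, true_and, Finset.mem_insert]
      constructor
      · intro h
        rcases Nat.lt_succ_iff_lt_or_eq.1 h with h' | h'
        · exact Or.inr h'
        · exact Or.inl (Fin.ext h')
      · rintro (h | h)
        · rw [h]; exact Nat.lt_succ_self k
        · omega
    have hnot : i ∉ Finset.univ.filter (fun i' : Fin n => i'.val < k) := by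
      simp only [Finset.mem_filter, Finset.mem_univ, true_and, not_lt]
      exact le_refl k
    rw [hfil, Finset.sum_insert hnot]
    have hIH := ih (le_of_lt hk1) j
    by_cases hmem : j ∈ neighborsBefore E i
    · have hji : j ≠ i := ne_of_lt ((mem_nb E).1 hmem).1
      have hnew : greedyPotential f E (k+1) j = max a w := by
        rw [gp_succ E k hk j, if_neg hji, if_pos hmem]
      rcases le_total w a with hwa | haw
      · have hX : pdX f α E j i = 0 := by
          unfold pdX
          rw [if_pos hmem]
          rw [max_eq_right (by simp only [hi]; linarith)]
          simp
        rw [hX, hnew, max_eq_left hwa, zero_add]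
        exact hIH
      · have hX : pdX f α E j i = (w - a) / (w + α) := by
          unfold pdX
          rw [if_pos hmem]
          rw [max_eq_left (by simp only [hi]; linarith)]
        rw [hX, hnew, max_eq_right haw]
        have hwpos : 0 < w + α := by linarith
        have hapos : 0 < a + α := by linarith
        have hkey : (w - a) / (w + α) ≤ Real.log (w + α) - Real.log (a + α) := by
          have hx := Real.log_le_sub_one_of_pos (x := (a + α) / (w + α))
            (div_pos hapos hwpos)
          rw [Real.log_div (ne_of_gt hapos) (ne_of_gt hwpos)] at hx
          have heq : (a + α) / (w + α) - 1 = (a - w) / (w + α) := by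
            field_simp
            ring
          rw [heq] at hx
          have hneg : (a - w) / (w + α) = -((w - a) / (w + α)) := by ring
          linarith
        have hlog1 : Real.log ((a + α) / α) = Real.log (a + α) - Real.log α :=
          Real.log_div (ne_of_gt hapos) (ne_of_gt hα)
        have hlog2 : Real.log ((w + α) / α) = Real.log (w + α) - Real.log α :=
          Real.log_div (ne_of_gt hwpos) (ne_of_gt hα)
        rw [hlog2]
        rw [hlog1] at hIH
        linarith
    · have hX : pdX f α E j i = 0 := by
        unfold pdX
        rw [if_neg hmem]
      have hmono : a ≤ greedyPotential f E (k+1) j := gp_le_succ E hα hf k j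
      have hlog : Real.log ((a + α) / α) ≤ Real.log ((greedyPotential f E (k+1) j + α) / α) := by
        apply Real.log_le_log (div_pos (by linarith) hα)
        exact (div_le_div_iff_of_pos_right hα).2 (by linarith)
      rw [hX, zero_add]
      exact le_trans hIH hlog

end PD
/-- Optimal online bipartite vertex cover: on a bipartite graph whose `l` left
vertices all arrive before the `r` right vertices, `GreedyAllocation` with
allocation function `f t = t + α`, `α = 1/(e-1)`, produces a fractional vertex
cover of size at most `(1+α)·|C*| = |C*|/(1-1/e)` for every (integral) vertex
cover `C*`. -/
theorem greedyAllocation_bipartite_optimal (l r : ℕ)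
    (E : Fin (l + r) → Fin (l + r) → Bool)
    (hsymm : ∀ i j, E i j = E j i)
    (hbip : ∀ i j, E i j = true →
      ((i : ℕ) < l ∧ l ≤ (j : ℕ)) ∨ ((j : ℕ) < l ∧ l ≤ (i : ℕ)))
    (α : ℝ) (hα : α = (Real.exp 1 - 1)⁻¹)
    (f : ℝ → ℝ) (hf : ∀ t, f t = t + α)
    (y : Fin (l + r) → ℝ) (hy : y = greedyPotential f E (l + r)) :
    (∀ v, y v ∈ Set.Icc (0:ℝ) 1) ∧
    (∀ i j, E i j = true → 1 ≤ y i + y j) ∧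
    (∀ Cstar : Finset (Fin (l + r)),
      (∀ i j, E i j = true → i ∈ Cstar ∨ j ∈ Cstar) →
      ∑ v, y v ≤ (1 + α) * (Cstar.card : ℝ) ∧
        (1 + α) * (Cstar.card : ℝ) = (Cstar.card : ℝ) / (1 - (Real.exp 1)⁻¹)) := by
  have he1 : (1:ℝ) < Real.exp 1 := by
    have := Real.exp_one_gt_d9
    norm_num at this
    linarith
  have hα' : 0 < α := by rw [hα]; exact inv_pos.2 (by linarith)
  subst hy
  refine ⟨fun v => gp_mem E hα' hf (l + r) v, ?_, ?_⟩
  · -- fractional vertex cover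
    have key : ∀ i j : Fin (l + r), j < i → E j i = true →
        1 ≤ greedyPotential f E (l + r) j + greedyPotential f E (l + r) i := by
      intro i j hji hE
      have hk : i.val < l + r := i.isLt
      have hmem : j ∈ neighborsBefore E i := (mem_nb E).2 ⟨hji, hE⟩
      have hieq : (⟨i.val, hk⟩ : Fin (l + r)) = i := rfl
      have h1 : greedyPotential f E (i.val + 1) i = 1 - stepLevel f E i := by
        rw [gp_succ E i.val hk i, hieq, if_pos rfl]
      have h2 : stepLevel f E i ≤ greedyPotential f E (i.val + 1) j := by
        rw [gp_succ E i.val hk j, hieq, if_neg (ne_of_lt hji), if_pos hmem]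
        exact le_max_right _ _
      have h3 := gp_mono E hα' hf (show i.val + 1 ≤ l + r from hk) j
      have h4 := gp_mono E hα' hf (show i.val + 1 ≤ l + r from hk) i
      rw [h1] at h4
      linarith
    intro i j hE
    have hne : i ≠ j := by
      intro h
      subst h
      rcases hbip i i hE with ⟨h1, h2⟩ | ⟨h1, h2⟩ <;> omega
    rcases lt_or_gt_of_ne hne with h | h
    · have := key j i h hE
      linarith
    · have hE' : E j i = true := by rw [hsymm]; exact hE
      have := key i j h hE'
      linarith
  · intro Cstar hC
    constructor
    · -- main competitive bound
      have hfilter : Finset.univ.filter (fun i : Fin (l + r) => i.val < l + r)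
          = Finset.univ := by
        apply Finset.filter_true_of_mem
        intro i _
        exact i.isLt
      have htot := total_eq E hα' hf (l + r) (le_refl _)
      rw [hfilter] at htot
      have hratio : (1 + α) / α = Real.exp 1 := by
        rw [hα]
        have h0 : Real.exp 1 - 1 ≠ 0 := by linarith
        field_simp
        ring
      have hrow1 : ∀ jj : Fin (l + r), ∑ i, pdX f α E jj i ≤ 1 := by
        intro jj
        have hrl := row_le E hα' hf (l + r) (le_refl _) jj
        rw [hfilter] at hrl
        have hle : greedyPotential f E (l + r) jj ≤ 1 := (gp_mem E hα' hf (l + r) jj).2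
        have hge : 0 ≤ greedyPotential f E (l + r) jj := (gp_mem E hα' hf (l + r) jj).1
        have hlog : Real.log ((greedyPotential f E (l + r) jj + α) / α) ≤ 1 := by
          have h1 : Real.log ((greedyPotential f E (l + r) jj + α) / α)
              ≤ Real.log ((1 + α) / α) := by
            apply Real.log_le_log (div_pos (by linarith) hα')
            exact (div_le_div_iff_of_pos_right hα').2 (by linarith)
          rw [hratio, Real.log_exp] at h1
          exact h1
        linarith
      have hcol0 : ∀ v : Fin (l + r), v.val < l → ∑ j, pdX f α E j v = 0 := by
        intro v hv
        apply Finset.sum_eq_zero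
        intro j _
        unfold pdX
        rw [if_neg]
        intro hmem
        obtain ⟨hlt, hEe⟩ := (mem_nb E).1 hmem
        have hlt' : j.val < v.val := hlt
        rcases hbip j v hEe with ⟨_, h2⟩ | ⟨_, h2⟩ <;> omega
      have hrow0 : ∀ v : Fin (l + r), l ≤ v.val → ∑ i, pdX f α E v i = 0 := by
        intro v hv
        apply Finset.sum_eq_zero
        intro i _
        unfold pdX
        rw [if_neg]
        intro hmem
        obtain ⟨hlt, hEe⟩ := (mem_nb E).1 hmem
        have hlt' : v.val < i.val := hlt
        rcases hbip v i hEe with ⟨h1, _⟩ | ⟨h1, _⟩ <;> omega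
      have hvert : ∀ v : Fin (l + r),
          (∑ i, pdX f α E v i) + (∑ j, pdX f α E j v) ≤ 1 := by
        intro v
        rcases Nat.lt_or_ge v.val l with hv | hv
        · have h1 := hrow1 v
          rw [hcol0 v hv]
          linarith
        · have h1 := col_le_one E hα' hf v
          rw [hrow0 v hv]
          linarith
      have hterm : ∀ i j : Fin (l + r), pdX f α E j i ≤
          (if j ∈ Cstar then pdX f α E j i else 0) +
          (if i ∈ Cstar then pdX f α E j i else 0) := by
        intro i j
        have hnn := pdX_nonneg E hα' hf j i
        by_cases hz : pdX f α E j i = 0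
        · rw [hz]
          split_ifs <;> simp
        · have hmem : j ∈ neighborsBefore E i := by
            by_contra hc
            exact hz (by unfold pdX; rw [if_neg hc])
          obtain ⟨_, hEe⟩ := (mem_nb E).1 hmem
          rcases hC j i hEe with hcj | hci
          · rw [if_pos hcj]
            split_ifs <;> linarith
          · rw [if_pos hci]
            split_ifs <;> linarith
      have hpairs : ∑ i : Fin (l + r), ∑ j, pdX f α E j i ≤ (Cstar.card : ℝ) := by
        have step1 : ∑ i : Fin (l + r), ∑ j, pdX f α E j i ≤
            (∑ i : Fin (l + r), ∑ j, (if j ∈ Cstar then pdX f α E j i else 0)) +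
            (∑ i : Fin (l + r), ∑ j, (if i ∈ Cstar then pdX f α E j i else 0)) := by
          rw [← Finset.sum_add_distrib]
          apply Finset.sum_le_sum
          intro i _
          rw [← Finset.sum_add_distrib]
          exact Finset.sum_le_sum fun j _ => hterm i j
        have e1 : ∑ i : Fin (l + r), ∑ j, (if j ∈ Cstar then pdX f α E j i else 0)
            = ∑ j ∈ Cstar, ∑ i, pdX f α E j i := by
          rw [Finset.sum_comm]
          have : ∀ j : Fin (l + r), ∑ i, (if j ∈ Cstar then pdX f α E j i else 0)
              = if j ∈ Cstar then ∑ i, pdX f α E j i else 0 := by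
            intro j
            split_ifs <;> simp
          rw [Finset.sum_congr rfl fun j _ => this j, Finset.sum_ite_mem,
            Finset.univ_inter]
        have e2 : ∑ i : Fin (l + r), ∑ j, (if i ∈ Cstar then pdX f α E j i else 0)
            = ∑ i ∈ Cstar, ∑ j, pdX f α E j i := by
          have : ∀ i : Fin (l + r), ∑ j, (if i ∈ Cstar then pdX f α E j i else 0)
              = if i ∈ Cstar then ∑ j, pdX f α E j i else 0 := by
            intro i
            split_ifs <;> simp
          rw [Finset.sum_congr rfl fun i _ => this i, Finset.sum_ite_mem,
            Finset.univ_inter]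
        rw [e1, e2, ← Finset.sum_add_distrib] at step1
        calc ∑ i : Fin (l + r), ∑ j, pdX f α E j i
            ≤ ∑ v ∈ Cstar, ((∑ i, pdX f α E v i) + (∑ j, pdX f α E j v)) := step1
          _ ≤ ∑ _v ∈ Cstar, (1:ℝ) := Finset.sum_le_sum fun v _ => hvert v
          _ = (Cstar.card : ℝ) := by simp
      rw [htot]
      exact mul_le_mul_of_nonneg_left hpairs (by linarith : (0:ℝ) ≤ 1 + α)
    · rw [hα]
      have h0 : Real.exp 1 - 1 ≠ 0 := by linarith
      have h1 : Real.exp 1 ≠ 0 := by linarith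
      have h2 : 1 - (Real.exp 1)⁻¹ ≠ 0 := by
        intro h
        have : (Real.exp 1)⁻¹ = 1 := by linarith
        have : Real.exp 1 = 1 := by
          field_simp at this
          linarith
        linarith
      field_simp
      ring
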